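/- Let a = 31207386885274502188173522132023665167365193670823768234185354856354918873864275 and M = 36812852443922071184402498913076070503146229820861211558347078871354783744850778, and for n ∈ ℕ set u_n = F_{3n}/2. Then for every integer x with x ≡ a (mod M) and all k, b ∈ ℕ, one has x² − u_{4+10k} ≠ 31^b and x² − u_{4+10k} ≠ −31^b. -/
import Mathlib


/-- `u n = F_{3n} / 2`, an integer since `F_{3n}` is always even. -/
def u (n : ℕ) : ℤ := (Nat.fib (3 * n) : ℤ) / 2

lemma two_mul_u (n : ℕ) : 2 * u n = (Nat.fib (3 * n) : ℤ) := by
  have h2 : (2 : ℤ) ∣ (Nat.fib (3 * n) : ℤ) := by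
    have : Nat.fib 3 ∣ Nat.fib (3 * n) := Nat.fib_dvd 3 (3 * n) ⟨n, rfl⟩
    exact_mod_cast Int.natCast_dvd_natCast.mpr this
  rw [u, Int.mul_ediv_cancel' h2]

lemma fib_add_90 (n : ℕ) : Nat.fib (n + 90) ≡ Nat.fib n [MOD 1991] := by
  have h := Nat.fib_add n 89
  have h89 : Nat.fib 89 ≡ 1 [MOD 1991] := by decide
  have h90 : Nat.fib 90 ≡ 0 [MOD 1991] := by decide
  calc Nat.fib (n + 90) = Nat.fib n * Nat.fib 89 + Nat.fib (n + 1) * Nat.fib 90 := h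
    _ ≡ Nat.fib n * 1 + Nat.fib (n + 1) * 0 [MOD 1991] :=
        Nat.ModEq.add (Nat.ModEq.mul_left _ h89) (Nat.ModEq.mul_left _ h90)
    _ = Nat.fib n := by ring

lemma fib_per : ∀ k : ℕ, Nat.fib (12 + 30 * k) ≡ Nat.fib (12 + 30 * (k % 3)) [MOD 1991] := by
  intro k
  induction k using Nat.strong_induction_on with
  | _ k ih =>
    rcases Nat.lt_or_ge k 3 with hk | hk
    · rw [Nat.mod_eq_of_lt hk]
    · obtain ⟨m, rfl⟩ : ∃ m, k = m + 3 := ⟨k - 3, by omega⟩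
      have h1 : 12 + 30 * (m + 3) = (12 + 30 * m) + 90 := by ring
      have h2 : (m + 3) % 3 = m % 3 := by omega
      rw [h1, h2]
      exact (fib_add_90 (12 + 30 * m)).trans (ih m (by omega))

lemma pow31_per (b : ℕ) : (31 : ZMod 1991) ^ b = 31 ^ (b % 20) := by
  conv_lhs => rw [← Nat.div_add_mod b 20]
  rw [pow_add, pow_mul]
  rw [show ((31 : ZMod 1991) ^ 20) = 1 from by decide, one_pow, one_mul]

lemma key : ∀ r : Fin 3, ∀ s : Fin 20,
    2 * (257 : ZMod 1991) ^ 2 - ![144, 1354, 1398] r ≠ 2 * 31 ^ (s : ℕ) ∧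
    2 * (257 : ZMod 1991) ^ 2 - ![144, 1354, 1398] r ≠ -(2 * 31 ^ (s : ℕ)) := by
  decide

/-- Case 4.2 of the proof of Theorem 1.3: for every integer
`x ≡ a (mod M)` and all `k, b ∈ ℕ`, `x² - u_{4+10k}` is not `±31^b`. -/
theorem sq_sub_u_ne_pm_pow_31
    (x : ℤ)
    (hx : x ≡ 31207386885274502188173522132023665167365193670823768234185354856354918873864275
      [ZMOD 36812852443922071184402498913076070503146229820861211558347078871354783744850778])
    (k b : ℕ) :
    x ^ 2 - u (4 + 10 * k) ≠ 31 ^ b ∧ x ^ 2 - u (4 + 10 * k) ≠ -(31 ^ b) := by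
  have hdvd : (1991 : ℤ) ∣ 36812852443922071184402498913076070503146229820861211558347078871354783744850778 := ⟨18489629554958348158916373135648453291384344460502868688270757845984321318358, by norm_num⟩
  have hx1991 : x ≡ 31207386885274502188173522132023665167365193670823768234185354856354918873864275 [ZMOD 1991] := hx.of_dvd hdvd
  have hxz : ((x : ℤ) : ZMod 1991) = (257 : ZMod 1991) := by
    have := (ZMod.intCast_eq_intCast_iff _ _ _).mpr hx1991
    rw [this]; decide
  -- the value of `2 * u (4+10k)` in `ZMod 1991`
  have h3 : 3 * (4 + 10 * k) = 12 + 30 * k := by ring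
  have hufib : (2 : ZMod 1991) * ((u (4 + 10 * k) : ℤ) : ZMod 1991)
      = ((Nat.fib (12 + 30 * (k % 3)) : ℕ) : ZMod 1991) := by
    have h := two_mul_u (4 + 10 * k)
    rw [h3] at h
    have hc : ((2 * u (4 + 10 * k) : ℤ) : ZMod 1991) = ((Nat.fib (12 + 30 * k) : ℤ) : ZMod 1991) := by
      exact_mod_cast congrArg (fun z : ℤ => ((z : ZMod 1991))) h
    push_cast at hc ⊢
    rw [hc]
    exact_mod_cast (ZMod.natCast_eq_natCast_iff _ _ _).mpr (fib_per k)
  have hklt : k % 3 < 3 := Nat.mod_lt _ (by norm_num)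
  have hblt : b % 20 < 20 := Nat.mod_lt _ (by norm_num)
  have hkey := key ⟨k % 3, hklt⟩ ⟨b % 20, hblt⟩
  have hC : ((Nat.fib (12 + 30 * (k % 3)) : ℕ) : ZMod 1991)
      = ![(144 : ZMod 1991), 1354, 1398] ⟨k % 3, hklt⟩ := by
    interval_cases h : k % 3 <;> simp [show Nat.fib 12 = 144 from by decide,
      show Nat.fib 42 = 267914296 from by decide,
      show Nat.fib 72 = 498454011879264 from by decide] <;> decide
  constructor <;> intro heq
  · have hz := congrArg (fun z : ℤ => ((z : ZMod 1991))) heq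
    push_cast at hz
    rw [hxz] at hz
    have hz2 := congrArg (fun z : ZMod 1991 => 2 * z) hz
    simp only [mul_sub] at hz2
    rw [hufib, hC, pow31_per] at hz2
    exact absurd hz2 (by simpa using hkey.1)
  · have hz := congrArg (fun z : ℤ => ((z : ZMod 1991))) heq
    push_cast at hz
    rw [hxz] at hz
    have hz2 := congrArg (fun z : ZMod 1991 => 2 * z) hz
    simp only [mul_sub, mul_neg] at hz2
    rw [hufib, hC, pow31_per] at hz2
    exact absurd hz2 (by simpa using hkey.2)
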